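/- Let N, d0, d1, d2 be positive integers, X ∈ ℝ^{N×d0}, Y ∈ ℝ^{N×d2}, and T ∈ (0,∞]. Let W : [0,T) → ℝ^{d0×d1} and V : [0,T) → ℝ^{d1×d2} be continuous curves, and set ℓ(t) = (1/2)‖Y − φ(X W(t)) V(t)‖_F². Assume ℓ is locally absolutely continuous on [0,T) and that its derivative satisfies ℓ'(t) ≤ −‖ φ(X W(t))ᵀ (Y − φ(X W(t)) V(t)) ‖_F² for a.e. t ∈ [0,T). Then for every t ∈ [0,T): ℓ(t) ≤ ℓ(0) · exp( −2 ∫₀ᵗ σ_min(φ(X W(s))ᵀ)² ds ). -/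

import Mathlib

open MeasureTheory
open scoped ENNReal

noncomputable section

/-- The ReLU function. -/
def relu (x : ℝ) : ℝ := max x 0

/-- Frobenius norm of a real matrix. -/
def frob {m n : ℕ} (A : Matrix (Fin m) (Fin n) ℝ) : ℝ :=
  Real.sqrt (∑ i, ∑ j, (A i j) ^ 2)

/-- Smallest eigenvalue of a Hermitian real matrix (0 if the matrix is not Hermitian). -/
def lamMin {n : ℕ} (S : Matrix (Fin n) (Fin n) ℝ) : ℝ :=
  if h : S.IsHermitian then ⨅ i, h.eigenvalues i else 0

/-- `σ_min(Mᵀ) = √(λ_min(M Mᵀ))`, the smallest singular value of `Mᵀ`. -/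
def sigmaMinT {N d : ℕ} (M : Matrix (Fin N) (Fin d) ℝ) : ℝ :=
  Real.sqrt (lamMin (M * M.transpose))

/-- The MSE loss `L(W,V) = (1/2)‖Y − φ(XW)V‖_F²`. -/
def mseLoss {N d0 d1 d2 : ℕ} (X : Matrix (Fin N) (Fin d0) ℝ) (Y : Matrix (Fin N) (Fin d2) ℝ)
    (W : Matrix (Fin d0) (Fin d1) ℝ) (V : Matrix (Fin d1) (Fin d2) ℝ) : ℝ :=
  (1 / 2) * (frob (Y - ((X * W).map relu) * V)) ^ 2

open Matrix

/-! ### Auxiliary lemmas -/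

section Aux
open Matrix

lemma frob_nonneg {m n : ℕ} (A : Matrix (Fin m) (Fin n) ℝ) : 0 ≤ frob A := Real.sqrt_nonneg _

lemma frob_sq {m n : ℕ} (A : Matrix (Fin m) (Fin n) ℝ) :
    frob A ^ 2 = ∑ i, ∑ j, (A i j) ^ 2 := by
  rw [frob, Real.sq_sqrt]
  exact Finset.sum_nonneg fun i _ => Finset.sum_nonneg fun j _ => sq_nonneg _

lemma lamMin_le {n : ℕ} {S : Matrix (Fin n) (Fin n) ℝ} (h : S.IsHermitian) (i : Fin n) :
    lamMin S ≤ h.eigenvalues i := by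
  rw [lamMin, dif_pos h]
  exact ciInf_le (Set.Finite.bddBelow (Set.finite_range _)) i

lemma star_eq_transpose' {n : ℕ} (A : Matrix (Fin n) (Fin n) ℝ) : star A = Aᵀ := by
  ext i j; simp [Matrix.star_apply]

lemma conjTranspose_eq_transpose' {m n : ℕ} (A : Matrix (Fin m) (Fin n) ℝ) : Aᴴ = Aᵀ := by
  ext i j; simp [Matrix.conjTranspose_apply]

/-- diagonalization of the quadratic form of a Hermitian matrix -/
lemma quad_eq_sum {n : ℕ} {S : Matrix (Fin n) (Fin n) ℝ} (h : S.IsHermitian) (x : Fin n → ℝ) :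
    ∃ y : Fin n → ℝ, x ⬝ᵥ (S *ᵥ x) = ∑ i, h.eigenvalues i * (y i)^2 ∧ x ⬝ᵥ x = ∑ i, (y i)^2 := by
  set P : Matrix (Fin n) (Fin n) ℝ := (h.eigenvectorUnitary : Matrix (Fin n) (Fin n) ℝ) with hP
  have hPu : (P * star P) = 1 := Matrix.mem_unitaryGroup_iff.mp h.eigenvectorUnitary.2
  set y : Fin n → ℝ := star P *ᵥ x with hy
  have hxP : x ᵥ* P = y := by
    rw [hy, star_eq_transpose', ← Matrix.vecMul_transpose, Matrix.transpose_transpose]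
  have hSx : S *ᵥ x = P *ᵥ (Matrix.diagonal (RCLike.ofReal ∘ h.eigenvalues) *ᵥ y) := by
    conv_lhs => rw [h.spectral_theorem]
    rw [Unitary.conjStarAlgAut_apply, ← hP, ← Matrix.mulVec_mulVec, ← Matrix.mulVec_mulVec, ← hy]
  refine ⟨y, ?_, ?_⟩
  · rw [hSx, Matrix.dotProduct_mulVec, hxP]
    simp only [dotProduct, Matrix.mulVec_diagonal]
    exact Finset.sum_congr rfl fun i _ => by
      simp [RCLike.ofReal]; ring
  · calc x ⬝ᵥ x = x ⬝ᵥ ((P * star P) *ᵥ x) := by rw [hPu]; simp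
      _ = (x ᵥ* P) ⬝ᵥ (star P *ᵥ x) := by
          rw [← Matrix.mulVec_mulVec, Matrix.dotProduct_mulVec]
      _ = ∑ i, (y i) ^ 2 := by
          rw [hxP, ← hy]
          exact Finset.sum_congr rfl fun i _ => by ring

lemma lamMin_quad {n : ℕ} {S : Matrix (Fin n) (Fin n) ℝ} (h : S.IsHermitian) (x : Fin n → ℝ) :
    lamMin S * (x ⬝ᵥ x) ≤ x ⬝ᵥ (S *ᵥ x) := by
  obtain ⟨y, h1, h2⟩ := quad_eq_sum h x
  rw [h1, h2, Finset.mul_sum]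
  exact Finset.sum_le_sum fun i _ =>
    mul_le_mul_of_nonneg_right (lamMin_le h i) (sq_nonneg _)

lemma exists_unit_lamMin {n : ℕ} (hn : 0 < n) {S : Matrix (Fin n) (Fin n) ℝ}
    (h : S.IsHermitian) : ∃ v : Fin n → ℝ, v ⬝ᵥ v = 1 ∧ v ⬝ᵥ (S *ᵥ v) = lamMin S := by
  haveI : Nonempty (Fin n) := ⟨⟨0, hn⟩⟩
  obtain ⟨i₀, hi₀⟩ := Finite.exists_min h.eigenvalues
  have hlam : lamMin S = h.eigenvalues i₀ :=
    le_antisymm (lamMin_le h i₀) (by rw [lamMin, dif_pos h]; exact le_ciInf hi₀)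
  set v : Fin n → ℝ := ⇑(h.eigenvectorBasis i₀) with hv
  have hnorm : ‖h.eigenvectorBasis i₀‖ = 1 := h.eigenvectorBasis.orthonormal.1 i₀
  have hvv : v ⬝ᵥ v = 1 := by
    have : ‖h.eigenvectorBasis i₀‖ ^ 2 = ∑ i, v i ^ 2 := by
      rw [EuclideanSpace.norm_eq, Real.sq_sqrt (Finset.sum_nonneg fun i _ => sq_nonneg _)]
      exact Finset.sum_congr rfl fun i _ => by rw [Real.norm_eq_abs, sq_abs]
    rw [dotProduct]
    rw [hnorm] at this
    simp only [one_pow] at this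
    rw [this]
    exact Finset.sum_congr rfl fun i _ => by ring
  refine ⟨v, hvv, ?_⟩
  have hSv : S *ᵥ v = h.eigenvalues i₀ • v := h.mulVec_eigenvectorBasis i₀
  rw [hSv, dotProduct_smul, smul_eq_mul, hvv, mul_one, hlam]

/-- Rayleigh quotient of a unit vector is bounded by the Frobenius norm. -/
lemma quad_le_frob {n : ℕ} (A : Matrix (Fin n) (Fin n) ℝ) (v : Fin n → ℝ) (hv : v ⬝ᵥ v = 1) :
    v ⬝ᵥ (A *ᵥ v) ≤ frob A := by
  have h1 : v ⬝ᵥ (A *ᵥ v) ≤ Real.sqrt (∑ i, v i ^ 2) * Real.sqrt (∑ i, (A *ᵥ v) i ^ 2) := by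
    have hcs := Finset.sum_mul_sq_le_sq_mul_sq Finset.univ v (A *ᵥ v)
    have h2 : v ⬝ᵥ (A *ᵥ v) ≤ |∑ i, v i * (A *ᵥ v) i| := le_abs_self _
    calc v ⬝ᵥ (A *ᵥ v) ≤ |∑ i, v i * (A *ᵥ v) i| := h2
      _ = Real.sqrt ((∑ i, v i * (A *ᵥ v) i) ^ 2) := (Real.sqrt_sq_eq_abs _).symm
      _ ≤ Real.sqrt ((∑ i, v i ^ 2) * ∑ i, (A *ᵥ v) i ^ 2) := Real.sqrt_le_sqrt hcs
      _ = Real.sqrt (∑ i, v i ^ 2) * Real.sqrt (∑ i, (A *ᵥ v) i ^ 2) := Real.sqrt_mul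
          (Finset.sum_nonneg fun i _ => sq_nonneg _) _
  have hv2 : (∑ i, v i ^ 2) = 1 := by
    rw [← hv, dotProduct]; exact Finset.sum_congr rfl fun i _ => by ring
  rw [hv2, Real.sqrt_one, one_mul] at h1
  refine h1.trans ?_
  rw [frob]
  apply Real.sqrt_le_sqrt
  have : ∀ i, (A *ᵥ v) i ^ 2 ≤ ∑ j, A i j ^ 2 := by
    intro i
    have hcs := Finset.sum_mul_sq_le_sq_mul_sq Finset.univ (fun j => A i j) v
    calc (A *ᵥ v) i ^ 2 = (∑ j, A i j * v j) ^ 2 := by rw [Matrix.mulVec, dotProduct]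
      _ ≤ (∑ j, A i j ^ 2) * ∑ j, v j ^ 2 := hcs
      _ = ∑ j, A i j ^ 2 := by rw [hv2, mul_one]
  exact Finset.sum_le_sum fun i _ => this i

/-- One-sided Lipschitz bound for `lamMin`. -/
lemma lamMin_le_add_frob {n : ℕ} (hn : 0 < n) {S₁ S₂ : Matrix (Fin n) (Fin n) ℝ}
    (h1 : S₁.IsHermitian) (h2 : S₂.IsHermitian) :
    lamMin S₁ ≤ lamMin S₂ + frob (S₁ - S₂) := by
  obtain ⟨v, hvv, hvS⟩ := exists_unit_lamMin hn h2
  have q1 : lamMin S₁ ≤ v ⬝ᵥ (S₁ *ᵥ v) := by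
    have := lamMin_quad h1 v
    rwa [hvv, mul_one] at this
  have q2 : v ⬝ᵥ (S₁ *ᵥ v) = v ⬝ᵥ (S₂ *ᵥ v) + v ⬝ᵥ ((S₁ - S₂) *ᵥ v) := by
    rw [Matrix.sub_mulVec, dotProduct_sub]; ring
  have q3 : v ⬝ᵥ ((S₁ - S₂) *ᵥ v) ≤ frob (S₁ - S₂) := quad_le_frob _ v hvv
  rw [q2, hvS] at q1
  linarith

lemma abs_lamMin_sub_le {n : ℕ} (hn : 0 < n) {S₁ S₂ : Matrix (Fin n) (Fin n) ℝ}
    (h1 : S₁.IsHermitian) (h2 : S₂.IsHermitian) :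
    |lamMin S₁ - lamMin S₂| ≤ frob (S₁ - S₂) := by
  have e : frob (S₂ - S₁) = frob (S₁ - S₂) := by
    rw [frob, frob]
    congr 1
    refine Finset.sum_congr rfl fun i _ => Finset.sum_congr rfl fun j _ => ?_
    simp [Matrix.sub_apply]
    ring
  have a1 := lamMin_le_add_frob hn h1 h2
  have a2 := lamMin_le_add_frob hn h2 h1
  rw [e] at a2
  rw [abs_sub_le_iff]
  constructor <;> linarith

/-- Key inequality: `λmin(M Mᵀ) ‖R‖² ≤ ‖Mᵀ R‖²`. -/
lemma key_ineq {N d p : ℕ} (M : Matrix (Fin N) (Fin d) ℝ) (R : Matrix (Fin N) (Fin p) ℝ) :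
    lamMin (M * Mᵀ) * (frob R) ^ 2 ≤ (frob (Mᵀ * R)) ^ 2 := by
  have hH : (M * Mᵀ).IsHermitian := by
    have := Matrix.isHermitian_mul_conjTranspose_self M
    rwa [conjTranspose_eq_transpose'] at this
  rw [frob_sq, frob_sq]
  have swap1 : (∑ i, ∑ j, R i j ^ 2) = ∑ j : Fin p, ∑ i : Fin N, R i j ^ 2 := Finset.sum_comm
  have swap2 : (∑ k, ∑ j, (Mᵀ * R) k j ^ 2) = ∑ j : Fin p, ∑ k : Fin d, (Mᵀ * R) k j ^ 2 :=
    Finset.sum_comm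
  rw [swap1, swap2, Finset.mul_sum]
  refine Finset.sum_le_sum fun j _ => ?_
  set x : Fin N → ℝ := fun i => R i j with hx
  have hxx : (∑ i, R i j ^ 2) = x ⬝ᵥ x := by
    rw [dotProduct]; exact Finset.sum_congr rfl fun i _ => by rw [hx]; ring
  have hMx : ∀ k, (Mᵀ * R) k j = (Mᵀ *ᵥ x) k := by
    intro k
    rw [Matrix.mul_apply, Matrix.mulVec, dotProduct]
  have hquad : (∑ k, (Mᵀ * R) k j ^ 2) = x ⬝ᵥ ((M * Mᵀ) *ᵥ x) := by
    have e1 : (∑ k, (Mᵀ * R) k j ^ 2) = (Mᵀ *ᵥ x) ⬝ᵥ (Mᵀ *ᵥ x) := by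
      rw [dotProduct]
      exact Finset.sum_congr rfl fun k _ => by rw [hMx k]; ring
    have e2 : x ⬝ᵥ ((M * Mᵀ) *ᵥ x) = (Mᵀ *ᵥ x) ⬝ᵥ (Mᵀ *ᵥ x) := by
      rw [← Matrix.mulVec_mulVec, Matrix.dotProduct_mulVec]
      congr 1
      rw [← Matrix.transpose_transpose M, Matrix.vecMul_transpose, Matrix.transpose_transpose]
    rw [e1, ← e2]
  rw [hxx, hquad]
  exact lamMin_quad hH x

lemma lamMin_nonneg_mul_transpose {N d : ℕ} (M : Matrix (Fin N) (Fin d) ℝ) :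
    0 ≤ lamMin (M * Mᵀ) := by
  have hH : (M * Mᵀ).PosSemidef := by
    have := Matrix.posSemidef_self_mul_conjTranspose M
    rwa [conjTranspose_eq_transpose'] at this
  rw [lamMin, dif_pos hH.1]
  rcases Nat.eq_zero_or_pos N with h | h
  · subst h
    haveI : IsEmpty (Fin 0) := inferInstance
    rw [Real.iInf_of_isEmpty]
  · haveI : Nonempty (Fin N) := ⟨⟨0, h⟩⟩
    exact le_ciInf fun i => hH.eigenvalues_nonneg i

lemma sigmaMinT_sq {N d : ℕ} (M : Matrix (Fin N) (Fin d) ℝ) :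
    sigmaMinT M ^ 2 = lamMin (M * Mᵀ) := by
  rw [sigmaMinT, Real.sq_sqrt (lamMin_nonneg_mul_transpose M)]

lemma exp_sub_sq_le {x : ℝ} (hx : 0 ≤ x) : Real.exp (x - x ^ 2) ≤ 1 + x := by
  set y := x - x ^ 2 with hy
  have h1 : 1 - y ≤ Real.exp (-y) := by
    have := Real.add_one_le_exp (-y); linarith
  have h2 : 0 < 1 - y := by nlinarith [sq_nonneg (x - 1/2)]
  have h3 : Real.exp y * (1 - y) ≤ Real.exp y * Real.exp (-y) :=
    mul_le_mul_of_nonneg_left h1 (Real.exp_pos y).le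
  rw [← Real.exp_add, add_neg_cancel, Real.exp_zero] at h3
  have h4 : (1 : ℝ) ≤ (1 + x) * (1 - y) := by nlinarith
  nlinarith [Real.exp_pos y]

end Aux

/-! ### Grönwall-type lemma -/

lemma gronwall_aux (t : ℝ) (ht : 0 ≤ t) (u c gg : ℝ → ℝ)
    (hu : ContinuousOn u (Set.Icc 0 t))
    (hu0 : ∀ s ∈ Set.Icc 0 t, 0 ≤ u s)
    (hc0 : ∀ s ∈ Set.Icc 0 t, 0 ≤ c s)
    (hcint : IntervalIntegrable c volume 0 t)
    (hgint : IntervalIntegrable gg volume 0 t)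
    (hG : ∀ s ∈ Set.Icc 0 t, u s - u 0 = ∫ x in (0:ℝ)..s, gg x)
    (hle : ∀ᵐ s ∂volume, s ∈ Set.Icc 0 t → gg s ≤ -(c s * u s)) :
    u t ≤ u 0 * Real.exp (-∫ s in (0:ℝ)..t, c s) := by
  -- sub-interval integrability
  have hsub : ∀ {f : ℝ → ℝ}, IntervalIntegrable f volume 0 t → ∀ r s : ℝ,
      r ∈ Set.Icc 0 t → s ∈ Set.Icc 0 t → IntervalIntegrable f volume r s := by
    intro f hf r s hr hs
    refine hf.mono_set (Set.uIcc_subset_uIcc ?_ ?_) <;>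
      rw [Set.uIcc_of_le ht] <;> assumption
  set C : ℝ → ℝ := fun s => ∫ x in (0:ℝ)..s, c x with hC
  have hCsub : ∀ r s : ℝ, r ∈ Set.Icc 0 t → s ∈ Set.Icc 0 t →
      C s - C r = ∫ x in r..s, c x := by
    intro r s hr hs
    exact intervalIntegral.integral_interval_sub_left (hsub hcint 0 s ⟨le_refl 0, ht⟩ hs)
      (hsub hcint 0 r ⟨le_refl 0, ht⟩ hr)
  have huIcc : ContinuousOn u (Set.uIcc 0 t) := by rwa [Set.uIcc_of_le ht]
  have hcuint : IntervalIntegrable (fun x => c x * u x) volume 0 t :=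
    hcint.mul_continuousOn huIcc
  -- a.e. bound on restricted measure
  have hle' : ∀ r s : ℝ, r ∈ Set.Icc 0 t → s ∈ Set.Icc 0 t → r ≤ s →
      (∫ x in r..s, gg x) ≤ ∫ x in r..s, -(c x * u x) := by
    intro r s hr hs hrs
    refine intervalIntegral.integral_mono_ae_restrict hrs (hsub hgint r s hr hs)
      ((hsub hcuint r s hr hs).neg) ?_
    filter_upwards [ae_restrict_of_ae hle, ae_restrict_mem measurableSet_Icc] with x h1 h2
    exact h1 ⟨le_trans hr.1 h2.1, le_trans h2.2 hs.2⟩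
  -- u is monotone nonincreasing
  have hmono : ∀ r s : ℝ, r ∈ Set.Icc 0 t → s ∈ Set.Icc 0 t → r ≤ s → u s ≤ u r := by
    intro r s hr hs hrs
    have e1 : u s - u r = ∫ x in r..s, gg x := by
      have := hG s hs; have := hG r hr
      have e := intervalIntegral.integral_interval_sub_left
        (hsub hgint 0 s ⟨le_refl 0, ht⟩ hs) (hsub hgint 0 r ⟨le_refl 0, ht⟩ hr)
      rw [← e, ← hG s hs, ← hG r hr]; ring
    have e2 : (∫ x in r..s, -(c x * u x)) ≤ 0 := by
      rw [intervalIntegral.integral_neg, neg_nonpos]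
      refine intervalIntegral.integral_nonneg hrs fun x hx => ?_
      have hx' : x ∈ Set.Icc 0 t := ⟨le_trans hr.1 hx.1, le_trans hx.2 hs.2⟩
      exact mul_nonneg (hc0 x hx') (hu0 x hx')
    have := hle' r s hr hs hrs
    linarith
  -- one-step estimate
  have hstep : ∀ r s : ℝ, r ∈ Set.Icc 0 t → s ∈ Set.Icc 0 t → r ≤ s →
      u s * (1 + (C s - C r)) ≤ u r := by
    intro r s hr hs hrs
    have e1 : u s - u r = ∫ x in r..s, gg x := by
      have e := intervalIntegral.integral_interval_sub_left
        (hsub hgint 0 s ⟨le_refl 0, ht⟩ hs) (hsub hgint 0 r ⟨le_refl 0, ht⟩ hr)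
      rw [← e, ← hG s hs, ← hG r hr]; ring
    have e2 : (∫ x in r..s, -(c x * u x)) ≤ ∫ x in r..s, -(u s) * c x := by
      refine intervalIntegral.integral_mono_on hrs ((hsub hcuint r s hr hs).neg)
        ((hsub hcint r s hr hs).const_mul _) fun x hx => ?_
      have hx' : x ∈ Set.Icc 0 t := ⟨le_trans hr.1 hx.1, le_trans hx.2 hs.2⟩
      have : u s ≤ u x := hmono x s hx' hs hx.2
      nlinarith [hc0 x hx']
    have e3 : (∫ x in r..s, -(u s) * c x) = -(u s) * (C s - C r) := by
      rw [intervalIntegral.integral_const_mul, hCsub r s hr hs]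
    have := (hle' r s hr hs hrs).trans (e2.trans_eq e3)
    rw [← e1] at this
    nlinarith
  -- continuity and uniform continuity of C
  have hCcont : ContinuousOn C (Set.Icc 0 t) := by
    have := intervalIntegral.continuousOn_primitive_interval'
      (μ := volume) (f := c) (b₁ := 0) (b₂ := t) hcint Set.left_mem_uIcc
    rwa [Set.uIcc_of_le ht] at this
  have hCuc : UniformContinuousOn C (Set.Icc 0 t) :=
    isCompact_Icc.uniformContinuousOn_of_continuous hCcont
  have hCt0 : 0 ≤ C t := by
    refine intervalIntegral.integral_nonneg ht fun x hx => hc0 x hx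
  -- main estimate for each ε > 0
  have hmain : ∀ ε : ℝ, 0 < ε → u t * Real.exp (C t - ε) ≤ u 0 := by
    intro ε hε
    set ε' : ℝ := ε / (C t + 1) with hε'
    have hε'pos : 0 < ε' := div_pos hε (by linarith)
    obtain ⟨δ, hδpos, hδ⟩ := Metric.uniformContinuousOn_iff_le.1 hCuc ε' hε'pos
    obtain ⟨n, hn⟩ := exists_nat_gt (t / δ)
    set m : ℕ := n + 1 with hm
    have hmpos : (0:ℝ) < m := by positivity
    have hstepsize : t / m < δ := by
      rw [div_lt_iff₀ hmpos]
      have h1 : t / δ < m := lt_of_lt_of_le hn (by exact_mod_cast Nat.le_succ n)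
      calc t = (t / δ) * δ := by field_simp
        _ < m * δ := by exact mul_lt_mul_of_pos_right h1 hδpos
        _ = δ * m := by ring
    set τ : ℕ → ℝ := fun i => i * (t / m) with hτ
    have hτmem : ∀ i : ℕ, i ≤ m → τ i ∈ Set.Icc 0 t := by
      intro i hi
      have hd : 0 ≤ t / m := div_nonneg ht hmpos.le
      constructor
      · exact mul_nonneg (Nat.cast_nonneg i) hd
      · have h1 : (i : ℝ) * (t / m) ≤ (m : ℝ) * (t / m) :=
          mul_le_mul_of_nonneg_right (by exact_mod_cast hi) hd
        have h2 : (m : ℝ) * (t / m) = t := by field_simp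
        simpa [hτ, h2] using h1
    have hτ0 : τ 0 = 0 := by simp [hτ]
    have hτm : τ m = t := by
      rw [hτ]; field_simp
    have hτle : ∀ i : ℕ, τ i ≤ τ (i + 1) := by
      intro i
      have hd : 0 ≤ t / m := div_nonneg ht hmpos.le
      have : (i : ℝ) ≤ (i + 1 : ℕ) := by exact_mod_cast Nat.le_succ i
      exact mul_le_mul_of_nonneg_right this hd
    have hτdiff : ∀ i : ℕ, τ (i + 1) - τ i = t / m := by
      intro i
      rw [hτ]
      push_cast
      ring
    set Δ : ℕ → ℝ := fun i => C (τ (i + 1)) - C (τ i) with hΔ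
    have hΔ0 : ∀ i : ℕ, i < m → 0 ≤ Δ i := by
      intro i hi
      have h1 : τ i ∈ Set.Icc 0 t := hτmem i hi.le
      have h2 : τ (i + 1) ∈ Set.Icc 0 t := hτmem (i + 1) hi
      rw [hΔ]
      simp only
      rw [hCsub (τ i) (τ (i + 1)) h1 h2]
      refine intervalIntegral.integral_nonneg (hτle i) fun x hx => ?_
      exact hc0 x ⟨le_trans h1.1 hx.1, le_trans hx.2 h2.2⟩
    have hΔε : ∀ i : ℕ, i < m → Δ i ≤ ε' := by
      intro i hi
      have h1 : τ i ∈ Set.Icc 0 t := hτmem i hi.le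
      have h2 : τ (i + 1) ∈ Set.Icc 0 t := hτmem (i + 1) hi
      have hdist : dist (τ (i + 1)) (τ i) ≤ δ := by
        rw [Real.dist_eq, hτdiff i, abs_of_nonneg (div_nonneg ht hmpos.le)]
        exact hstepsize.le
      have := hδ (τ (i + 1)) h2 (τ i) h1 hdist
      rw [Real.dist_eq] at this
      calc Δ i ≤ |C (τ (i + 1)) - C (τ i)| := le_abs_self _
        _ ≤ ε' := this
    have hind : ∀ k : ℕ, k ≤ m → u (τ k) * ∏ i ∈ Finset.range k, (1 + Δ i) ≤ u 0 := by
      intro k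
      induction k with
      | zero => intro _; simp [hτ0]
      | succ k ih =>
        intro hk
        have hk' : k ≤ m := Nat.le_of_succ_le hk
        have hprod_nonneg : 0 ≤ ∏ i ∈ Finset.range k, (1 + Δ i) :=
          Finset.prod_nonneg fun i hi => by
            have := hΔ0 i (lt_of_lt_of_le (Finset.mem_range.1 hi) hk'); linarith
        have hs := hstep (τ k) (τ (k + 1)) (hτmem k hk') (hτmem (k + 1) hk) (hτle k)
        calc u (τ (k + 1)) * ∏ i ∈ Finset.range (k + 1), (1 + Δ i)
            = (u (τ (k + 1)) * (1 + (C (τ (k + 1)) - C (τ k)))) * ∏ i ∈ Finset.range k, (1 + Δ i) := by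
              rw [Finset.prod_range_succ]; rw [hΔ]; ring
          _ ≤ u (τ k) * ∏ i ∈ Finset.range k, (1 + Δ i) :=
              mul_le_mul_of_nonneg_right hs hprod_nonneg
          _ ≤ u 0 := ih hk'
    have hsumΔ : ∑ i ∈ Finset.range m, Δ i = C t := by
      have := Finset.sum_range_sub (fun i => C (τ i)) m
      rw [hΔ]
      simp only
      rw [this, hτm, hτ0]
      have : C 0 = 0 := by rw [hC]; simp
      rw [this, sub_zero]
    have hprodge : Real.exp (C t - ε) ≤ ∏ i ∈ Finset.range m, (1 + Δ i) := by
      have hsum2 : ∑ i ∈ Finset.range m, (Δ i) ^ 2 ≤ ε := by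
        have h1 : ∑ i ∈ Finset.range m, (Δ i) ^ 2 ≤ ∑ i ∈ Finset.range m, ε' * Δ i := by
          refine Finset.sum_le_sum fun i hi => ?_
          have hi' := Finset.mem_range.1 hi
          have := hΔ0 i hi'
          have := hΔε i hi'
          nlinarith
        rw [← Finset.mul_sum, hsumΔ] at h1
        refine h1.trans ?_
        rw [hε']
        rw [div_mul_eq_mul_div, mul_comm, ← div_mul_eq_mul_div]
        have : C t / (C t + 1) ≤ 1 := by
          rw [div_le_one (by linarith)]; linarith
        nlinarith
      have h2 : C t - ε ≤ ∑ i ∈ Finset.range m, (Δ i - (Δ i) ^ 2) := by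
        rw [Finset.sum_sub_distrib, hsumΔ]
        linarith
      calc Real.exp (C t - ε) ≤ Real.exp (∑ i ∈ Finset.range m, (Δ i - (Δ i) ^ 2)) :=
            Real.exp_le_exp.2 h2
        _ = ∏ i ∈ Finset.range m, Real.exp (Δ i - (Δ i) ^ 2) := Real.exp_sum _ _
        _ ≤ ∏ i ∈ Finset.range m, (1 + Δ i) := by
            refine Finset.prod_le_prod (fun i _ => (Real.exp_pos _).le) fun i hi => ?_
            exact exp_sub_sq_le (hΔ0 i (Finset.mem_range.1 hi))
    have hut0 : 0 ≤ u t := hu0 t ⟨ht, le_refl t⟩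
    have hfin := hind m (le_refl m)
    rw [hτm] at hfin
    calc u t * Real.exp (C t - ε) ≤ u t * ∏ i ∈ Finset.range m, (1 + Δ i) :=
          mul_le_mul_of_nonneg_left hprodge hut0
      _ ≤ u 0 := hfin
  -- pass to the limit ε → 0
  have hu00 : 0 ≤ u 0 := hu0 0 ⟨le_refl 0, ht⟩
  show u t ≤ u 0 * Real.exp (-(C t))
  refine le_of_forall_pos_le_add fun η hη => ?_
  rcases eq_or_lt_of_le hu00 with h0 | h0
  · -- u 0 = 0
    have := hmain 1 one_pos
    have hut : u t ≤ 0 := by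
      rw [← h0] at this
      nlinarith [Real.exp_pos (C t - 1)]
    have : 0 ≤ u 0 * Real.exp (-(C t)) := mul_nonneg hu00 (Real.exp_pos _).le
    linarith
  · -- u 0 > 0
    set B : ℝ := u 0 * Real.exp (-(C t)) with hB
    have hBpos : 0 < B := mul_pos h0 (Real.exp_pos _)
    set ε : ℝ := Real.log (1 + η / B) with hεdef
    have hεpos : 0 < ε := Real.log_pos (by
      have : 0 < η / B := div_pos hη hBpos
      linarith)
    have h1 := hmain ε hεpos
    have h2 : u t ≤ u 0 * Real.exp (ε - C t) := by
      have hmul := mul_le_mul_of_nonneg_right h1 (Real.exp_pos (ε - C t)).le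
      have e0 : C t - ε + (ε - C t) = 0 := by ring
      rw [mul_assoc, ← Real.exp_add, e0, Real.exp_zero, mul_one] at hmul
      exact hmul
    have h3 : u 0 * Real.exp (ε - C t) = B + η := by
      have hexpε : Real.exp ε = 1 + η / B := Real.exp_log (by positivity)
      have : Real.exp (ε - C t) = Real.exp ε * Real.exp (-(C t)) := by
        rw [← Real.exp_add]; ring_nf
      rw [this, hexpε, hB]
      field_simp
    linarith

/-! ### Continuity of `lamMin` along a continuous curve of Hermitian matrices -/

open Matrix in
lemma continuousOn_lamMin {n : ℕ} (S : ℝ → Matrix (Fin n) (Fin n) ℝ) (U : Set ℝ)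
    (hn : 0 < n)
    (hherm : ∀ s, (S s).IsHermitian)
    (hcont : ∀ i j, ContinuousOn (fun s => S s i j) U) :
    ContinuousOn (fun s => lamMin (S s)) U := by
  intro s₀ hs₀
  have hfr : ContinuousWithinAt (fun s => frob (S s - S s₀)) U s₀ := by
    have heq : (fun s => frob (S s - S s₀)) =
        fun s => Real.sqrt (∑ i, ∑ j, (S s i j - S s₀ i j) ^ 2) := by
      funext s; rw [frob]; congr 1
    rw [heq]
    exact (Real.continuous_sqrt.comp_continuousOn (continuousOn_finset_sum _ fun i _ =>
      continuousOn_finset_sum _ fun j _ => ((hcont i j).sub continuousOn_const).pow 2)) s₀ hs₀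
  have h0 : frob (S s₀ - S s₀) = 0 := by
    simp [frob]
  rw [ContinuousWithinAt] at hfr ⊢
  rw [h0] at hfr
  apply tendsto_iff_dist_tendsto_zero.2
  refine squeeze_zero (fun s => dist_nonneg) (fun s => ?_) hfr
  rw [Real.dist_eq]
  exact abs_lamMin_sub_le hn (hherm s) (hherm s₀)

/-- exponential decay of the loss along curves whose loss derivative is
dominated by minus the squared norm of the second-layer gradient. -/
theorem statement6
    (N d0 d1 d2 : ℕ) (hN : 0 < N) (hd0 : 0 < d0) (hd1 : 0 < d1) (hd2 : 0 < d2)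
    (X : Matrix (Fin N) (Fin d0) ℝ) (Y : Matrix (Fin N) (Fin d2) ℝ)
    (T : ℝ≥0∞) (hT : 0 < T)
    (W : ℝ → Matrix (Fin d0) (Fin d1) ℝ) (V : ℝ → Matrix (Fin d1) (Fin d2) ℝ)
    -- `W` and `V` are continuous curves on [0,T) (entrywise)
    (hWcont : ∀ i j, ContinuousOn (fun s => W s i j) {s : ℝ | 0 ≤ s ∧ ENNReal.ofReal s < T})
    (hVcont : ∀ i j, ContinuousOn (fun s => V s i j) {s : ℝ | 0 ≤ s ∧ ENNReal.ofReal s < T})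
    (ℓ : ℝ → ℝ) (hℓ : ℓ = fun t => mseLoss X Y (W t) (V t))
    -- `ℓ` is locally absolutely continuous on [0,T) with derivative `g`
    (g : ℝ → ℝ)
    (hFTC : ∀ t : ℝ, 0 ≤ t → ENNReal.ofReal t < T →
      IntervalIntegrable g volume 0 t ∧ ℓ t - ℓ 0 = ∫ s in (0:ℝ)..t, g s)
    -- the derivative bound: ℓ'(t) ≤ −‖φ(XW(t))ᵀ (Y − φ(XW(t))V(t))‖_F² for a.e. t ∈ [0,T)
    (hg : ∀ᵐ s ∂volume, 0 ≤ s → ENNReal.ofReal s < T →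
      g s ≤ -(frob (((X * W s).map relu).transpose *
        (Y - ((X * W s).map relu) * V s))) ^ 2) :
    ∀ t : ℝ, 0 ≤ t → ENNReal.ofReal t < T →
      ℓ t ≤ ℓ 0 * Real.exp (-2 * ∫ s in (0:ℝ)..t, (sigmaMinT ((X * W s).map relu)) ^ 2) := by
  intro t ht htT
  set U : Set ℝ := {s : ℝ | 0 ≤ s ∧ ENNReal.ofReal s < T} with hU
  have hIccU : Set.Icc 0 t ⊆ U := fun s hs =>
    ⟨hs.1, lt_of_le_of_lt (ENNReal.ofReal_le_ofReal hs.2) htT⟩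
  set M : ℝ → Matrix (Fin N) (Fin d1) ℝ := fun s => (X * W s).map relu with hM
  set R : ℝ → Matrix (Fin N) (Fin d2) ℝ := fun s => Y - M s * V s with hR
  set c : ℝ → ℝ := fun s => 2 * (sigmaMinT (M s)) ^ 2 with hc
  -- continuity of the entries of M
  have hrelu : Continuous relu := continuous_id.max continuous_const
  have hMc : ∀ i j, ContinuousOn (fun s => M s i j) U := by
    intro i j
    have heq : (fun s => M s i j) = fun s => relu (∑ k, X i k * W s k j) := by
      funext s; rw [hM]; simp [Matrix.map_apply, Matrix.mul_apply]
    rw [heq]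
    exact hrelu.comp_continuousOn (continuousOn_finset_sum _ fun k _ =>
      continuousOn_const.mul (hWcont k j))
  have hRc : ∀ i j, ContinuousOn (fun s => R s i j) U := by
    intro i j
    have heq : (fun s => R s i j) = fun s => Y i j - ∑ k, M s i k * V s k j := by
      funext s; rw [hR]; simp [Matrix.sub_apply, Matrix.mul_apply]
    rw [heq]
    exact continuousOn_const.sub (continuousOn_finset_sum _ fun k _ =>
      (hMc i k).mul (hVcont k j))
  have hfrobR : ContinuousOn (fun s => frob (R s)) U := by
    have heq : (fun s => frob (R s)) = fun s => Real.sqrt (∑ i, ∑ j, (R s i j) ^ 2) := by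
      funext s; rw [frob]
    rw [heq]
    exact Real.continuous_sqrt.comp_continuousOn (continuousOn_finset_sum _ fun i _ =>
      continuousOn_finset_sum _ fun j _ => (hRc i j).pow 2)
  have huc : ContinuousOn ℓ U := by
    rw [hℓ]
    have heq : (fun s => mseLoss X Y (W s) (V s)) = fun s => (1/2) * (frob (R s)) ^ 2 := by
      funext s; rw [mseLoss, hR, hM]
    rw [heq]
    exact continuousOn_const.mul (hfrobR.pow 2)
  -- continuity of c
  have hSherm : ∀ s, (M s * (M s)ᵀ).IsHermitian := by
    intro s
    have := Matrix.isHermitian_mul_conjTranspose_self (M s)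
    rwa [conjTranspose_eq_transpose'] at this
  have hSc : ∀ i j, ContinuousOn (fun s => (M s * (M s)ᵀ) i j) U := by
    intro i j
    have heq : (fun s => (M s * (M s)ᵀ) i j) = fun s => ∑ k, M s i k * M s j k := by
      funext s; simp [Matrix.mul_apply, Matrix.transpose_apply]
    rw [heq]
    exact continuousOn_finset_sum _ fun k _ => (hMc i k).mul (hMc j k)
  have hlamc : ContinuousOn (fun s => lamMin (M s * (M s)ᵀ)) U :=
    continuousOn_lamMin _ U hN hSherm hSc
  have hcc : ContinuousOn c U := by
    have heq : c = fun s => 2 * (Real.sqrt (lamMin (M s * (M s)ᵀ))) ^ 2 := rfl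
    rw [heq]
    exact continuousOn_const.mul ((Real.continuous_sqrt.comp_continuousOn hlamc).pow 2)
  -- hypotheses of the Grönwall lemma
  have hcint : IntervalIntegrable c volume 0 t := by
    apply ContinuousOn.intervalIntegrable
    rw [Set.uIcc_of_le ht]
    exact hcc.mono hIccU
  have hgint : IntervalIntegrable g volume 0 t := (hFTC t ht htT).1
  have hG : ∀ s ∈ Set.Icc 0 t, ℓ s - ℓ 0 = ∫ x in (0:ℝ)..s, g x := fun s hs =>
    (hFTC s hs.1 (lt_of_le_of_lt (ENNReal.ofReal_le_ofReal hs.2) htT)).2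
  have hu0 : ∀ s ∈ Set.Icc 0 t, 0 ≤ ℓ s := by
    intro s _
    rw [hℓ]
    exact mul_nonneg (by norm_num) (sq_nonneg _)
  have hc0 : ∀ s ∈ Set.Icc 0 t, 0 ≤ c s := by
    intro s _
    rw [hc]
    positivity
  have hle : ∀ᵐ s ∂volume, s ∈ Set.Icc 0 t → g s ≤ -(c s * ℓ s) := by
    filter_upwards [hg] with s hgs hs
    have hsU := hIccU hs
    have h1 := hgs hsU.1 hsU.2
    refine h1.trans ?_
    rw [neg_le_neg_iff]
    have hval : c s * ℓ s = lamMin (M s * (M s)ᵀ) * (frob (R s)) ^ 2 := by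
      rw [hℓ]
      show 2 * sigmaMinT (M s) ^ 2 * ((1/2) * (frob (R s)) ^ 2) = _
      rw [sigmaMinT_sq]; ring
    rw [hval]
    have := key_ineq (M s) (R s)
    calc lamMin (M s * (M s)ᵀ) * (frob (R s)) ^ 2 ≤ (frob ((M s)ᵀ * R s)) ^ 2 := this
      _ = (frob (((X * W s).map relu).transpose * (Y - ((X * W s).map relu) * V s))) ^ 2 := by
          rw [hR, hM]
  have hmain := gronwall_aux t ht ℓ c g (huc.mono hIccU) hu0 hc0 hcint hgint hG hle
  have hint : (∫ s in (0:ℝ)..t, c s) = 2 * ∫ s in (0:ℝ)..t, (sigmaMinT (M s)) ^ 2 := by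
    rw [hc]
    exact intervalIntegral.integral_const_mul 2 _
  rw [hint] at hmain
  refine hmain.trans (le_of_eq ?_)
  rw [neg_mul]
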